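/- Let K be a number field of degree 4 over ℚ that is totally complex (K has no real embeddings, i.e. no ring homomorphism K →+* ℝ exists). Suppose y ∈ K satisfies y² = d·1 for some rational number d > 1 that is not a rational square. Then there exist rational numbers p and q with p < 0 and p² − q²·d > 0, and an element x ∈ K with x² = p·1 + q·y, such that the family (1, y, x, x·y) is a basis of K as a ℚ-vector space. -/

import Mathlib

open IntermediateField Polynomial

private lemma quadmul {K : Type*} [Field K] [CharZero K] {d : ℚ} {y : K}
    (hy : y ^ 2 = d • (1:K)) (a b a' b' : ℚ) :
    (a • (1:K) + b • y) * (a' • (1:K) + b' • y)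
      = (a*a' + b*b'*d) • (1:K) + (a*b' + a'*b) • y := by
  have hyy : y * y = d • (1:K) := by rw [← sq]; exact hy
  simp only [mul_add, add_mul, smul_mul_assoc, mul_smul_comm, smul_smul, mul_one, one_mul, hyy]
  module

theorem stmt_0 (K : Type*) [Field K] [NumberField K]
    (hdeg : Module.finrank ℚ K = 4)
    (htc : IsEmpty (K →+* ℝ))
    (d : ℚ) (hd : 1 < d) (hdsq : ¬ ∃ t : ℚ, t ^ 2 = d)
    (y : K) (hy : y ^ 2 = (d : ℚ) • (1 : K)) :
    ∃ p q : ℚ, p < 0 ∧ 0 < p ^ 2 - q ^ 2 * d ∧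
      ∃ x : K, x ^ 2 = p • (1 : K) + q • y ∧
        ∃ B : Module.Basis (Fin 4) ℚ K, ⇑B = ![1, y, x, x * y] := by
  -- y is not in the image of ℚ
  have hyrange : y ∉ (algebraMap ℚ K).range := by
    rintro ⟨t, rfl⟩
    refine hdsq ⟨t, ?_⟩
    have h1 : ((t^2 : ℚ) : K) = algebraMap ℚ K t ^ 2 := by push_cast; rfl
    have h2 : algebraMap ℚ K t ^ 2 = algebraMap ℚ K d := by
      rw [hy, Algebra.algebraMap_eq_smul_one]
    exact (algebraMap ℚ K).injective (by rw [← h2]; push_cast; rfl)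
  have hyint : IsIntegral ℚ y := IsIntegral.of_finite ℚ y
  set F : IntermediateField ℚ K := ℚ⟮y⟯ with hF
  have hyF : y ∈ F := mem_adjoin_simple_self ℚ y
  -- minpoly of y has degree 2
  have hminy : (minpoly ℚ y).natDegree = 2 := by
    have hdvd : minpoly ℚ y ∣ X ^ 2 - C d := by
      apply minpoly.dvd
      simp [Algebra.algebraMap_eq_smul_one, hy]
    have hnd2 : (X ^ 2 - C d : ℚ[X]).natDegree = 2 := by compute_degree!
    have hne : (X ^ 2 - C d : ℚ[X]) ≠ 0 := fun h => by simp [h] at hnd2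
    have hle : (minpoly ℚ y).natDegree ≤ 2 := by
      have := natDegree_le_of_dvd hdvd hne
      omega
    have hge : 2 ≤ (minpoly ℚ y).natDegree :=
      (minpoly.two_le_natDegree_iff hyint).mpr hyrange
    omega
  have hFrank : Module.finrank ℚ F = 2 := by
    rw [hF, adjoin.finrank hyint, hminy]
  -- every element of F is a ℚ-combination of 1 and y
  have hspan : ∀ v : K, v ∈ F → ∃ a b : ℚ, v = a • (1:K) + b • y := by
    intro v hv
    have hv' : v ∈ Algebra.adjoin ℚ ({y} : Set K) := by
      rw [← IntermediateField.adjoin_simple_toSubalgebra_of_isAlgebraic hyint.isAlgebraic]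
      exact hv
    clear hv
    induction hv' using Algebra.adjoin_induction with
    | mem z hz =>
      rw [Set.mem_singleton_iff] at hz
      exact ⟨0, 1, by simp [hz]⟩
    | algebraMap r => exact ⟨r, 0, by simp [Algebra.algebraMap_eq_smul_one]⟩
    | add u w hu hw ihu ihw =>
      obtain ⟨a, b, rfl⟩ := ihu
      obtain ⟨a', b', rfl⟩ := ihw
      exact ⟨a + a', b + b', by module⟩
    | mul u w hu hw ihu ihw =>
      obtain ⟨a, b, rfl⟩ := ihu
      obtain ⟨a', b', rfl⟩ := ihw
      exact ⟨a*a' + b*b'*d, a*b' + a'*b, quadmul hy a b a' b'⟩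
  -- a combination of 1 and y lies in F
  have hmemF : ∀ a b : ℚ, a • (1:K) + b • y ∈ F := by
    intro a b
    exact F.add_mem (F.smul_mem F.one_mem) (F.smul_mem hyF)
  -- K has dimension 2 over F
  have hrankFK : Module.finrank F K = 2 := by
    have := Module.finrank_mul_finrank ℚ F K
    rw [hFrank, hdeg] at this
    omega
  -- there is an element outside F
  obtain ⟨z, hzF⟩ : ∃ z : K, z ∉ F := by
    by_contra h
    push_neg at h
    have : F = ⊤ := by ext w; simp [h w]
    rw [this] at hFrank
    rw [IntermediateField.finrank_top', hdeg] at hFrank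
    omega
  -- z satisfies a monic quadratic over F
  have hzint : IsIntegral F z := IsIntegral.of_finite F z
  have hndz : (minpoly F z).natDegree = 2 := by
    have hdvd : (minpoly F z).natDegree ∣ 2 := hrankFK ▸ minpoly.degree_dvd hzint
    have hge : 2 ≤ (minpoly F z).natDegree := by
      refine (minpoly.two_le_natDegree_iff hzint).mpr ?_
      rintro ⟨w, rfl⟩
      exact hzF w.2
    exact le_antisymm (Nat.le_of_dvd (by norm_num) hdvd) hge
  obtain ⟨b, c, hrel⟩ : ∃ b c : F, z^2 + (b:K) * z + (c:K) = 0 := by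
    refine ⟨(minpoly F z).coeff 1, (minpoly F z).coeff 0, ?_⟩
    have h0 := minpoly.aeval F z
    rw [aeval_eq_sum_range, hndz] at h0
    rw [Finset.sum_range_succ, Finset.sum_range_succ, Finset.sum_range_one] at h0
    have hc2 : (minpoly F z).coeff 2 = 1 := by
      have := (minpoly.monic hzint).coeff_natDegree
      rwa [hndz] at this
    rw [hc2] at h0
    simp only [Algebra.smul_def, pow_zero, mul_one, pow_one, map_one, one_mul,
      IntermediateField.algebraMap_apply] at h0
    rw [← h0]
    ring
  -- construct x₀ with x₀ ∉ F and x₀² ∈ F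
  set x₀ : K := z + (b:K)/2 with hx₀
  have h2F : (2:K) ∈ F := by
    have : (2:K) = algebraMap ℚ K 2 := by norm_num
    rw [this]; exact F.algebraMap_mem 2
  have hx₀F : x₀ ∉ F := by
    intro hmem
    apply hzF
    have : z = x₀ - (b:K)/2 := by rw [hx₀]; ring
    rw [this]
    exact F.sub_mem hmem (F.div_mem b.2 h2F)
  have hx₀sq : x₀^2 = (b:K)^2/4 - (c:K) := by
    rw [hx₀]
    field_simp
    linear_combination (16:K) * hrel
  obtain ⟨p₀, q₀, hx₀rep⟩ : ∃ a b' : ℚ, x₀^2 = a • (1:K) + b' • y := by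
    apply hspan
    rw [hx₀sq]
    have h4F : (4:K) ∈ F := by
      have : (4:K) = algebraMap ℚ K 4 := by norm_num
      rw [this]; exact F.algebraMap_mem 4
    exact F.sub_mem (F.div_mem (by rw [sq]; exact F.mul_mem b.2 b.2) h4F) c.2
  -- upgrade to q ≠ 0
  obtain ⟨x, p, q, hxF, hq, hxq⟩ :
      ∃ (x : K) (p q : ℚ), x ∉ F ∧ q ≠ 0 ∧ x^2 = p • (1:K) + q • y := by
    by_cases h0 : q₀ = 0
    · subst h0
      have hp₀ : p₀ ≠ 0 := by
        intro h
        subst h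
        apply hx₀F
        have : x₀ ^ 2 = 0 := by rw [hx₀rep]; simp
        rw [pow_eq_zero_iff (by norm_num : 2 ≠ 0)] at this
        rw [this]; exact F.zero_mem
      have h1y : (1:K) + y ≠ 0 := by
        intro h
        apply hyrange
        refine ⟨-1, ?_⟩
        rw [map_neg, map_one]
        linear_combination -h
      refine ⟨x₀ * (1 + y), p₀ * (1+d), p₀ * 2, ?_, by simp [hp₀], ?_⟩
      · intro hmem
        apply hx₀F
        have h1yF : (1:K) + y ∈ F := F.add_mem F.one_mem hyF
        have : x₀ = (x₀ * (1 + y)) * ((1:K)+y)⁻¹ := by field_simp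
        rw [this]
        exact F.mul_mem hmem (F.inv_mem h1yF)
      · have e1 : ((1:K) + y) = (1:ℚ) • (1:K) + (1:ℚ) • y := by module
        have e2 : (x₀ * (1 + y))^2 = x₀^2 * (((1:K)+y) * ((1:K)+y)) := by ring
        rw [e2, e1, quadmul hy 1 1 1 1, hx₀rep, quadmul hy p₀ 0 _ _]
        module
    · exact ⟨x₀, p₀, q₀, hx₀F, h0, hx₀rep⟩
  clear hx₀rep hx₀F hx₀sq hx₀ hrel hndz hzint hzF h2F
  -- the minimal polynomial of x over ℚ has degree 4
  have hxint : IsIntegral ℚ x := IsIntegral.of_finite ℚ x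
  have hxrange : x ∉ (algebraMap ℚ K).range := by
    rintro ⟨t, rfl⟩
    exact hxF (F.algebraMap_mem t)
  have hp1mem : ∀ (E : IntermediateField ℚ K) (a : ℚ), a • (1:K) ∈ E := by
    intro E a
    rw [← Algebra.algebraMap_eq_smul_one]
    exact E.algebraMap_mem a
  have hFle : F ≤ ℚ⟮x⟯ := by
    rw [hF, adjoin_simple_le_iff]
    have hx1 : x ∈ ℚ⟮x⟯ := mem_adjoin_simple_self ℚ x
    have hqy : q • y ∈ ℚ⟮x⟯ := by
      have h1 : q • y = x^2 - p • (1:K) := by rw [hxq]; module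
      rw [h1]
      exact sub_mem (pow_mem hx1 2) (hp1mem _ p)
    have h2 : y = q⁻¹ • (q • y) := by
      rw [smul_smul, inv_mul_cancel₀ hq, one_smul]
    rw [h2, Algebra.smul_def]
    exact mul_mem (IntermediateField.algebraMap_mem _ _) hqy
  have hnd : (minpoly ℚ x).natDegree = 4 := by
    have hdvd4 : (minpoly ℚ x).natDegree ∣ 4 := hdeg ▸ minpoly.degree_dvd hxint
    have hge2 : 2 ≤ (minpoly ℚ x).natDegree :=
      (minpoly.two_le_natDegree_iff hxint).mpr hxrange
    have hne2 : (minpoly ℚ x).natDegree ≠ 2 := by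
      intro h2
      have hEr : Module.finrank ℚ ℚ⟮x⟯ = 2 := by rw [adjoin.finrank hxint, h2]
      have hFE : F = ℚ⟮x⟯ := eq_of_le_of_finrank_eq hFle (by rw [hFrank, hEr])
      exact hxF (hFE ▸ mem_adjoin_simple_self ℚ x)
    have hle4 : (minpoly ℚ x).natDegree ≤ 4 := Nat.le_of_dvd (by norm_num) hdvd4
    set n := (minpoly ℚ x).natDegree with hn
    interval_cases n
    · omega
    · exact absurd hdvd4 (by norm_num)
    · rfl
  have hEtop : ℚ⟮x⟯ = ⊤ :=
    eq_of_le_of_finrank_eq le_top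
      (by rw [adjoin.finrank hxint, hnd, IntermediateField.finrank_top', hdeg])
  -- the minimal polynomial is X⁴ - 2pX² + (p² - q²d)
  set μ : ℚ[X] := X^4 + C (-(2*p)) * X^2 + C (p^2 - q^2*d) with hμ
  have hx4 : x^4 = (p*p + q*q*d) • (1:K) + (p*q + p*q) • y := by
    have h1 : x^4 = (x^2)*(x^2) := by ring
    rw [h1, hxq, quadmul hy p q p q]
  have hμx : aeval x μ = 0 := by
    rw [hμ]
    simp only [map_add, map_mul, map_pow, aeval_X, aeval_C,
      Algebra.algebraMap_eq_smul_one]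
    rw [hx4, hxq]
    simp only [smul_mul_assoc, one_mul]
    module
  have hmono : μ.Monic := by rw [hμ]; monicity!
  have hndμ : μ.natDegree = 4 := by rw [hμ]; compute_degree!
  have hminμ : minpoly ℚ x = μ :=
    eq_of_dvd_of_natDegree_le_of_leadingCoeff (minpoly.dvd ℚ x hμx)
      (by rw [hnd, hndμ]) (by rw [(minpoly.monic hxint).leadingCoeff, hmono.leadingCoeff])
  -- μ has no real root
  have hnoroot : ∀ r : ℝ, r^4 - 2*(p:ℝ)*r^2 + ((p:ℝ)^2 - (q:ℝ)^2*(d:ℝ)) ≠ 0 := by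
    intro r hr
    have haev : (aeval r) (minpoly ℚ x) = 0 := by
      rw [hminμ, hμ]
      simp only [map_add, map_mul, map_pow, aeval_X, aeval_C, eq_ratCast]
      push_cast
      linear_combination hr
    have hroot : r ∈ (minpoly ℚ x).aroots ℝ := by
      rw [mem_aroots]
      exact ⟨minpoly.ne_zero hxint, haev⟩
    have φ : ℚ⟮x⟯ →ₐ[ℚ] ℝ := (algHomAdjoinIntegralEquiv ℚ hxint).symm ⟨r, hroot⟩
    have e : K ≃ₐ[ℚ] ℚ⟮x⟯ :=
      (IntermediateField.topEquiv (F := ℚ) (E := K)).symm.trans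
        (IntermediateField.equivOfEq hEtop.symm)
    exact htc.false ((φ.comp e.toAlgHom).toRingHom)
  -- consequently p < 0 and p² - q²d > 0
  have hkey : p < 0 ∧ 0 < p^2 - q^2*d := by
    by_contra hcon
    rw [not_and_or, not_lt, not_lt] at hcon
    have hd0 : (0:ℝ) < (d:ℝ) := by exact_mod_cast lt_trans one_pos hd
    set s : ℝ := Real.sqrt ((q:ℝ)^2*(d:ℝ)) with hs
    have hs2 : s^2 = (q:ℝ)^2*(d:ℝ) := Real.sq_sqrt (mul_nonneg (sq_nonneg _) hd0.le)
    have hsnn : 0 ≤ s := Real.sqrt_nonneg _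
    have hps : (0:ℝ) ≤ (p:ℝ) + s := by
      rcases hcon with h | h
      · have hp0 : (0:ℝ) ≤ (p:ℝ) := by exact_mod_cast h
        linarith
      · have h' : (p:ℝ)^2 ≤ (q:ℝ)^2*(d:ℝ) := by exact_mod_cast (by linarith : p^2 ≤ q^2*d)
        have h2 := Real.sqrt_le_sqrt h'
        rw [Real.sqrt_sq_eq_abs] at h2
        have h3 := neg_abs_le (p:ℝ)
        rw [hs]
        linarith
    set r : ℝ := Real.sqrt ((p:ℝ) + s) with hr
    have hr2 : r^2 = (p:ℝ) + s := Real.sq_sqrt hps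
    apply hnoroot r
    have hr4 : r^4 = ((p:ℝ)+s)^2 := by rw [show r^4 = (r^2)^2 by ring, hr2]
    rw [hr4, hr2]
    nlinarith [hs2]
  -- (1, y, x, xy) is a ℚ-basis
  have lip : LinearIndependent ℚ (fun i : Fin 4 => x ^ (i:ℕ)) := by
    have h := linearIndependent_pow (K := ℚ) x
    rwa [hnd] at h
  have hyx : y = q⁻¹ • x^2 + (-(q⁻¹*p)) • (1:K) := by
    have h1 : q • y = x^2 - p • (1:K) := by rw [hxq]; module
    have h2 : y = q⁻¹ • (q • y) := by rw [smul_smul, inv_mul_cancel₀ hq, one_smul]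
    rw [h2, h1]
    module
  have li : LinearIndependent ℚ ![(1:K), y, x, x*y] := by
    apply Fintype.linearIndependent_iff.mpr
    intro g hg
    rw [Fin.sum_univ_four] at hg
    simp only [Matrix.cons_val_zero, Matrix.cons_val_one, Matrix.head_cons,
      Matrix.cons_val_two, Matrix.tail_cons, Matrix.cons_val_three] at hg
    rw [hyx] at hg
    simp only [mul_add, mul_smul_comm, mul_one, show x*x^2 = x^3 from by ring] at hg
    have hg' : (g 0 + g 1 * (-(q⁻¹*p))) • (1:K) + (g 2 + g 3 * (-(q⁻¹*p))) • x
        + (g 1 * q⁻¹) • x^2 + (g 3 * q⁻¹) • x^3 = 0 := by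
      rw [← hg]
      module
    have hco := Fintype.linearIndependent_iff.mp lip
      ![g 0 + g 1 * (-(q⁻¹*p)), g 2 + g 3 * (-(q⁻¹*p)), g 1 * q⁻¹, g 3 * q⁻¹]
      (by
        rw [Fin.sum_univ_four]
        simpa using hg')
    have h0 := hco 0
    have h1 := hco 1
    have h2 := hco 2
    have h3 := hco 3
    simp only [Matrix.cons_val_zero, Matrix.cons_val_one, Matrix.head_cons,
      Matrix.cons_val_two, Matrix.tail_cons, Matrix.cons_val_three] at h0 h1 h2 h3
    have hqi : q⁻¹ ≠ 0 := inv_ne_zero hq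
    have hg1 : g 1 = 0 := by
      rcases mul_eq_zero.mp h2 with h | h
      · exact h
      · exact absurd h hqi
    have hg3 : g 3 = 0 := by
      rcases mul_eq_zero.mp h3 with h | h
      · exact h
      · exact absurd h hqi
    have hg0 : g 0 = 0 := by rw [hg1] at h0; simpa using h0
    have hg2 : g 2 = 0 := by rw [hg3] at h1; simpa using h1
    intro i
    fin_cases i <;> assumption
  refine ⟨p, q, hkey.1, hkey.2, x, hxq, ?_⟩
  have hcard : Fintype.card (Fin 4) = Module.finrank ℚ K := by simp [hdeg]
  exact ⟨basisOfLinearIndependentOfCardEqFinrank li hcard,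
    coe_basisOfLinearIndependentOfCardEqFinrank li hcard⟩
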